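/- arXiv:1908.02734 — 8 statements merged into one kernel-verified Lean document; each statement's English description precedes it below -/
import Mathlib

section
/- Let S be a convex subset of ℝⁿ, let ω : S → ℝ be continuously differentiable and 1-strongly convex, and define the Bregman divergence W(y,x) = ω(y) - ω(x) - ⟨∇ω(x), y - x⟩. Suppose g : S → ℝ satisfies g(y) ≥ g(x) + ⟨g'(x), y - x⟩ + μ·W(y,x) for all x, y ∈ S and some μ ≥ 0, where g' is a (sub)gradient selection. If x̄ = argmin_{x ∈ S} { g(x) + W(x, x̃) }, then for all x ∈ S: g(x̄) + W(x̄, x̃) + (μ+1)·W(x, x̄) ≤ g(x) + W(x, x̃). -/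
local notation "⟪" x ", " y "⟫" => @inner ℝ _ _ x y

/-- Lemma 2.4: three-point lemma for Bregman proximal steps. -/
theorem stmt_0 {n : ℕ} (S : Set (EuclideanSpace ℝ (Fin n))) (hS : Convex ℝ S)
    (ω : EuclideanSpace ℝ (Fin n) → ℝ)
    (gradω : EuclideanSpace ℝ (Fin n) → EuclideanSpace ℝ (Fin n))
    (hω : ∀ x ∈ S, HasGradientAt ω (gradω x) x)
    (hsc : ∀ x ∈ S, ∀ y ∈ S,
      ω y ≥ ω x + ⟪gradω x, y - x⟫ + (1/2) * ‖y - x‖^2)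
    (W : EuclideanSpace ℝ (Fin n) → EuclideanSpace ℝ (Fin n) → ℝ)
    (hW : ∀ x y, W y x = ω y - ω x - ⟪gradω x, y - x⟫)
    (g : EuclideanSpace ℝ (Fin n) → ℝ)
    (g' : EuclideanSpace ℝ (Fin n) → EuclideanSpace ℝ (Fin n))
    (μ : ℝ) (hμ : 0 ≤ μ)
    (hg : ∀ x ∈ S, ∀ y ∈ S, g y ≥ g x + ⟪g' x, y - x⟫ + μ * W y x)
    (xtil : EuclideanSpace ℝ (Fin n)) (hxtil : xtil ∈ S)
    (xbar : EuclideanSpace ℝ (Fin n)) (hxbar : xbar ∈ S)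
    (hmin : ∀ x ∈ S, g xbar + W xbar xtil ≤ g x + W x xtil) :
    ∀ x ∈ S, g xbar + W xbar xtil + (μ + 1) * W x xbar ≤ g x + W x xtil := by
  intro x hx
  set v : EuclideanSpace ℝ (Fin n) := x - xbar with hv
  set F : ℝ → ℝ := fun t => ω (xbar + t • v) with hFdef
  -- pointwise bound for each t ∈ (0,1]
  have key : ∀ t ∈ Set.Ioc (0:ℝ) 1,
      (μ + 1) * (((1 - t) * ω xbar + t * ω x - F t) / t)
        ≤ g x + W x xtil - (g xbar + W xbar xtil) := by
    intro t ht
    set z : EuclideanSpace ℝ (Fin n) := xbar + t • v with hzdef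
    have hzc : z = (1 - t) • xbar + t • x := by
      rw [hzdef, hv]; module
    have hzS : z ∈ S := by
      rw [hzc]
      exact hS hxbar hx (by linarith [ht.2]) ht.1.le (by ring)
    have e1 : xbar - z = (-t) • v := by rw [hzdef]; module
    have e2 : x - z = (1 - t) • v := by rw [hzdef, hv]; module
    have e3 : z - xtil = (xbar - xtil) + t • v := by rw [hzdef]; module
    have e4 : x - xtil = (xbar - xtil) + (1:ℝ) • v := by rw [hv]; module
    have hA := hg z hzS xbar hxbar
    have hB := hg z hzS x hx
    have hm := hmin z hzS
    simp only [hW, e1, e2, real_inner_smul_right] at hA hB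
    have hWz : W z xtil = ω z - ω xtil - (⟪gradω xtil, xbar - xtil⟫ + t * ⟪gradω xtil, v⟫) := by
      rw [hW, e3, inner_add_right, real_inner_smul_right]
    have hWx : W x xtil = ω x - ω xtil - (⟪gradω xtil, xbar - xtil⟫ + 1 * ⟪gradω xtil, v⟫) := by
      rw [hW, e4, inner_add_right, real_inner_smul_right]
    have hWxb : W xbar xtil = ω xbar - ω xtil - ⟪gradω xtil, xbar - xtil⟫ := by
      rw [hW]
    have hFz : F t = ω z := by rw [hFdef]
    rw [← mul_div_assoc, div_le_iff₀ ht.1]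
    have c1 := mul_le_mul_of_nonneg_left hA (by linarith [ht.2] : (0:ℝ) ≤ 1 - t)
    have c2 := mul_le_mul_of_nonneg_left hB ht.1.le
    rw [hWz, hWxb] at hm
    rw [hWx, hWxb, hFz]
    nlinarith [c1, c2, hm]
  -- the limit as t → 0⁺
  have hF0 : F 0 = ω xbar := by simp [hFdef]
  have hd : HasDerivAt F ⟪gradω xbar, v⟫ 0 := by
    have hC : HasDerivAt (fun t : ℝ => xbar + t • v) v 0 := by
      simpa using ((hasDerivAt_id (0:ℝ)).smul_const v).const_add xbar
    have hF' : HasFDerivAt ω (InnerProductSpace.toDual ℝ _ (gradω xbar)) xbar :=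
      (hasGradientAt_iff_hasFDerivAt.mp (hω xbar hxbar))
    have : HasFDerivAt ω (InnerProductSpace.toDual ℝ _ (gradω xbar))
        ((fun t : ℝ => xbar + t • v) 0) := by simpa using hF'
    have h := this.comp_hasDerivAt 0 hC
    simp only [InnerProductSpace.toDual_apply_apply] at h
    exact h
  have hslope : Filter.Tendsto (fun t : ℝ => (F t - F 0) / t) (nhdsWithin 0 (Set.Ioi 0))
      (nhds ⟪gradω xbar, v⟫) := by
    have := hasDerivAt_iff_tendsto_slope.mp hd
    have h2 := this.mono_left (nhdsWithin_mono 0 (by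
      intro y hy
      exact ne_of_gt hy : Set.Ioi (0:ℝ) ⊆ {(0:ℝ)}ᶜ))
    refine h2.congr' ?_
    filter_upwards [self_mem_nhdsWithin] with t ht
    simp [slope_def_field, div_eq_inv_mul]
  have hlim : Filter.Tendsto (fun t : ℝ => ((1 - t) * ω xbar + t * ω x - F t) / t)
      (nhdsWithin 0 (Set.Ioi 0)) (nhds (W x xbar)) := by
    have h1 : Filter.Tendsto (fun t : ℝ => (ω x - ω xbar) - (F t - F 0) / t)
        (nhdsWithin 0 (Set.Ioi 0)) (nhds ((ω x - ω xbar) - ⟪gradω xbar, v⟫)) :=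
      Filter.Tendsto.const_sub _ hslope
    have heq : W x xbar = (ω x - ω xbar) - ⟪gradω xbar, v⟫ := by
      rw [hW, hv]
    rw [heq]
    refine h1.congr' ?_
    filter_upwards [self_mem_nhdsWithin] with t ht
    have htne : t ≠ 0 := ne_of_gt ht
    rw [hF0]
    field_simp
    ring
  have hev : ∀ᶠ t in nhdsWithin (0:ℝ) (Set.Ioi 0),
      (μ + 1) * (((1 - t) * ω xbar + t * ω x - F t) / t)
        ≤ g x + W x xtil - (g xbar + W xbar xtil) := by
    filter_upwards [Ioc_mem_nhdsGT_of_mem (by norm_num : (0:ℝ) ∈ Set.Ico (0:ℝ) 1)] with t ht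
    exact key t ht
  have hfin : (μ + 1) * W x xbar ≤ g x + W x xtil - (g xbar + W xbar xtil) :=
    le_of_tendsto (hlim.const_mul (μ + 1)) hev
  linarith
end

section
/- Consider the proximal point iteration: x_k = argmin over x ∈ X of ψ₀(x) + 2μ₀W(x, x_{k-1}) subject to ψᵢ(x) + 2μᵢW(x, x_{k-1}) ≤ 0 for i ∈ [m], where ψᵢ(·; x_{k-1}) := ψᵢ(·) + 2μᵢW(·, x_{k-1}) is μᵢ-strongly convex. If x₀ is feasible (ψᵢ(x₀) ≤ 0 for all i), then the iterates satisfy Σ_{k=1}^{K} ‖x_{k-1} - x_k‖² ≤ (2/(3μ₀)) · [ψ₀(x₀) - ψ₀(x_K)], and in particular the sequence {ψ₀(x_k)} is monotonically decreasing. -/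
/-- Theorem 3.3 a): square summability of successive iterates and monotone
descent for the exact proximal point method. -/
theorem stmt_6 {n m : ℕ} (X : Set (EuclideanSpace ℝ (Fin n)))
    (hXc : Convex ℝ X) (hXcp : IsCompact X)
    (W : EuclideanSpace ℝ (Fin n) → EuclideanSpace ℝ (Fin n) → ℝ)
    (hWpos : ∀ x y, 0 ≤ W x y)
    (hWlow : ∀ x y, ‖x - y‖^2 ≤ 2 * W x y)
    (hWzero : ∀ x, W x x = 0)
    (ψ0 : EuclideanSpace ℝ (Fin n) → ℝ) (ψ : Fin m → EuclideanSpace ℝ (Fin n) → ℝ)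
    (μ0 : ℝ) (μ : Fin m → ℝ) (hμ0 : 0 < μ0) (hμ : ∀ i, 0 ≤ μ i)
    (x : ℕ → EuclideanSpace ℝ (Fin n))
    (hx0 : x 0 ∈ X) (hfeas0 : ∀ i, ψ i (x 0) ≤ 0)
    (hxk : ∀ k, x (k + 1) ∈ X)
    -- x_{k+1} is feasible for the (k+1)-st subproblem
    (hsubfeas : ∀ k, ∀ i, ψ i (x (k + 1)) + 2 * μ i * W (x (k + 1)) (x k) ≤ 0)
    -- x_{k+1} minimizes the μ₀-strongly convex subproblem objective
    (hopt : ∀ k, ∀ z ∈ X, (∀ i, ψ i z + 2 * μ i * W z (x k) ≤ 0) →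
      ψ0 z + 2 * μ0 * W z (x k) ≥
        ψ0 (x (k + 1)) + 2 * μ0 * W (x (k + 1)) (x k) + μ0 * W z (x (k + 1))) :
    (∀ K : ℕ, ∑ k ∈ Finset.range K, ‖x k - x (k + 1)‖^2 ≤
        2 / (3 * μ0) * (ψ0 (x 0) - ψ0 (x K))) ∧
    (∀ k, ψ0 (x (k + 1)) ≤ ψ0 (x k)) := by
  have hmem : ∀ k, x k ∈ X := by
    intro k; cases k with
    | zero => exact hx0
    | succ k => exact hxk k
  have hfeas : ∀ k i, ψ i (x k) ≤ 0 := by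
    intro k i; cases k with
    | zero => exact hfeas0 i
    | succ k =>
      have h := hsubfeas k i
      nlinarith [hWpos (x (k+1)) (x k), hμ i]
  have key : ∀ k, ‖x k - x (k + 1)‖^2 ≤ 2 / (3 * μ0) * (ψ0 (x k) - ψ0 (x (k+1))) := by
    intro k
    have h := hopt k (x k) (hmem k) (by
      intro i
      have := hfeas k i
      rw [hWzero]; linarith)
    rw [hWzero] at h
    have h1 := hWlow (x (k+1)) (x k)
    have h2 := hWlow (x k) (x (k+1))
    have hn : ‖x (k+1) - x k‖ = ‖x k - x (k+1)‖ := norm_sub_rev _ _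
    rw [hn] at h1
    rw [div_mul_eq_mul_div, le_div_iff₀ (by linarith)]
    nlinarith
  have hdec : ∀ k, ψ0 (x (k + 1)) ≤ ψ0 (x k) := by
    intro k
    have := key k
    have h2 : (0:ℝ) ≤ ‖x k - x (k+1)‖^2 := sq_nonneg _
    nlinarith [div_pos (by norm_num : (0:ℝ) < 2) (by linarith : 0 < 3 * μ0)]
  refine ⟨?_, hdec⟩
  intro K
  induction K with
  | zero => simp
  | succ K ih =>
    rw [Finset.sum_range_succ]
    have := key K
    nlinarith
end

section
/- In the exact proximal point method for nonconvex functional constrained optimization, suppose x₀ is strictly feasible (ψᵢ(x₀) < 0 for all i ∈ [m]). Then either the algorithm terminates with x₁ = x₀, or every iterate x_k is strictly feasible for the original problem, i.e., ψᵢ(x_k) < 0 for all i ∈ [m] and all k ≥ 1. -/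
/-- Theorem 3.3 (strict feasibility): either the exact proximal point method
terminates with x₁ = x₀, or all iterates are strictly feasible. -/
theorem stmt_7 {n m : ℕ} (X : Set (EuclideanSpace ℝ (Fin n)))
    (hXc : Convex ℝ X) (hXcp : IsCompact X)
    (W : EuclideanSpace ℝ (Fin n) → EuclideanSpace ℝ (Fin n) → ℝ)
    (hWlow : ∀ x y, ‖x - y‖^2 ≤ 2 * W x y)
    (hWzero : ∀ x, W x x = 0)
    (hWpos : ∀ x y, x ≠ y → 0 < W x y)
    (ψ : Fin m → EuclideanSpace ℝ (Fin n) → ℝ)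
    (hψcont : ∀ i, Continuous (ψ i))
    (μ : Fin m → ℝ) (hμ : ∀ i, 0 < μ i)
    (x : ℕ → EuclideanSpace ℝ (Fin n))
    (hx0 : x 0 ∈ X)
    -- x₀ is strictly feasible
    (hstrict0 : ∀ i, ψ i (x 0) < 0)
    (hxk : ∀ k, x (k + 1) ∈ X)
    -- x_{k+1} solves (in particular is feasible for) the (k+1)-st subproblem
    (hsubfeas : ∀ k, ∀ i, ψ i (x (k + 1)) + 2 * μ i * W (x (k + 1)) (x k) ≤ 0) :
    x 1 = x 0 ∨ ∀ k, 1 ≤ k → ∀ i, ψ i (x k) < 0 := by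
  have key : ∀ k, ∀ i, ψ i (x k) < 0 := by
    intro k
    induction k with
    | zero => exact hstrict0
    | succ k ih =>
      intro i
      by_cases h : x (k + 1) = x k
      · rw [h]; exact ih i
      · have hW := hWpos _ _ h
        have := hsubfeas k i
        nlinarith [hμ i]
  exact Or.inr fun k _ i => key k i
end

section
/- Let x₀ be strictly feasible and let (x_k, y_k) be a KKT pair for the k-th proximal subproblem min_{x∈X} ψ₀(x; x_{k-1}) s.t. ψᵢ(x; x_{k-1}) ≤ 0, where ψ₀(·; x̄) is μ₀-strongly convex and ψᵢ(·; x̄) is μᵢ-strongly convex w.r.t. W. Then the dual multipliers satisfy ‖y_k‖₁ ≤ [ψ₀(x_{k-1}) - ψ₀(x_k)] / min_{1≤i≤m} {-ψᵢ(x_{k-1})}. -/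
/-- Proposition 3.5 (relation (3.9)): bound on the ℓ₁-norm of the dual
multipliers of the proximal subproblem via strict feasibility of x_{k-1}. -/
theorem stmt_8 {n m : ℕ} [NeZero m] (X : Set (EuclideanSpace ℝ (Fin n)))
    (hXc : Convex ℝ X)
    (W : EuclideanSpace ℝ (Fin n) → EuclideanSpace ℝ (Fin n) → ℝ)
    (hWpos : ∀ x y, 0 ≤ W x y) (hWzero : ∀ x, W x x = 0)
    (ψ0 : EuclideanSpace ℝ (Fin n) → ℝ) (ψ : Fin m → EuclideanSpace ℝ (Fin n) → ℝ)
    (μ0 : ℝ) (μ : Fin m → ℝ) (hμ0 : 0 ≤ μ0) (hμ : ∀ i, 0 ≤ μ i)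
    (xkm1 xk : EuclideanSpace ℝ (Fin n)) (hxkm1 : xkm1 ∈ X) (hxk : xk ∈ X)
    -- x_{k-1} is strictly feasible for the original problem
    (hstrict : ∀ i, ψ i xkm1 < 0)
    (y : Fin m → ℝ) (hy : ∀ i, 0 ≤ y i)
    -- saddle inequality satisfied by the KKT pair (x_k, y_k) of the subproblem
    (hsaddle : ∀ x ∈ X,
      (ψ0 x + 2 * μ0 * W x xkm1) - (ψ0 xk + 2 * μ0 * W xk xkm1)
        + ∑ i, y i * (ψ i x + 2 * μ i * W x xkm1)
      ≥ (μ0 + ∑ i, μ i * y i) * W x xk) :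
    ∑ i, y i ≤ (ψ0 xkm1 - ψ0 xk) /
      (Finset.univ.inf' Finset.univ_nonempty fun i => -ψ i xkm1) := by

  set c := Finset.univ.inf' Finset.univ_nonempty fun i => -ψ i xkm1 with hc
  have hcpos : 0 < c := by
    rw [hc]
    apply (Finset.lt_inf'_iff _).2
    intro i _
    linarith [hstrict i]
  have h := hsaddle xkm1 hxkm1
  rw [hWzero] at h
  have hWk := hWpos xk xkm1
  have hWk2 := hWpos xkm1 xk
  have hsum : 0 ≤ ∑ i, μ i * y i :=
    Finset.sum_nonneg fun i _ => mul_nonneg (hμ i) (hy i)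
  have hrhs : 0 ≤ (μ0 + ∑ i, μ i * y i) * W xkm1 xk :=
    mul_nonneg (by linarith) hWk2
  simp only [mul_zero, add_zero] at h
  have key : ∑ i, y i * (-ψ i xkm1) ≤ ψ0 xkm1 - ψ0 xk := by
    have : ∑ i, y i * (ψ i xkm1) ≥ -(ψ0 xkm1 - ψ0 xk) + 2 * μ0 * W xk xkm1 := by
      nlinarith
    have e : ∑ i, y i * (-ψ i xkm1) = -∑ i, y i * ψ i xkm1 := by
      rw [← Finset.sum_neg_distrib]; congr 1; ext i; ring
    nlinarith [mul_nonneg (mul_nonneg (by norm_num : (0:ℝ) ≤ 2) hμ0) hWk]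
  have hlb : c * ∑ i, y i ≤ ∑ i, y i * (-ψ i xkm1) := by
    rw [Finset.mul_sum]
    apply Finset.sum_le_sum
    intro i _
    rw [mul_comm]
    exact mul_le_mul_of_nonneg_left (Finset.inf'_le _ (Finset.mem_univ i)) (hy i)
  rw [le_div_iff₀ hcpos, mul_comm]
  linarith
end

section
/- Suppose there exists x̄ ∈ X with ψᵢ(x̄) ≤ -2μᵢD_X² for all i ∈ [m], where D_X := max_{x,y∈X} √(2W(x,y)). Then for every x_{k-1} ∈ X, the point x̄ satisfies ψᵢ(x̄) + 2μᵢW(x̄, x_{k-1}) ≤ -μᵢD_X² < 0 (so every proximal subproblem is strictly feasible), and any KKT multiplier y_k of the k-th subproblem satisfies the uniform bound ‖y_k‖₁ ≤ (ψ₀(x̄) - ψ₀* + μ₀D_X²)/(μ_min D_X²), where μ_min = min_{1≤i≤m} μᵢ > 0 and ψ₀* = min over the feasible set of ψ₀. -/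
/-- Lemma 3.12: strong feasibility condition (3.21) ensures strict feasibility
of every proximal subproblem and a uniform bound on the dual multipliers. -/
theorem stmt_9 {n m : ℕ} [NeZero m] (X : Set (EuclideanSpace ℝ (Fin n)))
    (hXc : Convex ℝ X)
    (W : EuclideanSpace ℝ (Fin n) → EuclideanSpace ℝ (Fin n) → ℝ)
    (hWpos : ∀ x y, 0 ≤ W x y)
    (DX : ℝ) (hDX : 0 < DX)
    -- D_X is the Bregman diameter: √(2 W(x,y)) ≤ D_X on X
    (hdiam : ∀ x ∈ X, ∀ y ∈ X, 2 * W x y ≤ DX ^ 2)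
    (ψ0 : EuclideanSpace ℝ (Fin n) → ℝ) (ψ : Fin m → EuclideanSpace ℝ (Fin n) → ℝ)
    (μ0 : ℝ) (μ : Fin m → ℝ) (hμ0 : 0 ≤ μ0) (hμ : ∀ i, 0 < μ i)
    (xbar : EuclideanSpace ℝ (Fin n)) (hxbar : xbar ∈ X)
    -- strong feasibility: ψᵢ(x̄) ≤ -2 μᵢ D_X²
    (hsf : ∀ i, ψ i xbar ≤ -2 * μ i * DX ^ 2)
    (xkm1 xk : EuclideanSpace ℝ (Fin n)) (hxkm1 : xkm1 ∈ X) (hxk : xk ∈ X)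
    (y : Fin m → ℝ) (hy : ∀ i, 0 ≤ y i)
    -- ψ₀* lower bounds the subproblem optimal value
    (ψ0star : ℝ) (hψ0star : ψ0star ≤ ψ0 xk)
    -- saddle inequality satisfied by the KKT pair (x_k, y_k) of the subproblem
    (hsaddle : ∀ x ∈ X,
      (ψ0 x + 2 * μ0 * W x xkm1) - (ψ0 xk + 2 * μ0 * W xk xkm1)
        + ∑ i, y i * (ψ i x + 2 * μ i * W x xkm1)
      ≥ (μ0 + ∑ i, μ i * y i) * W x xk) :
    (∀ i, ψ i xbar + 2 * μ i * W xbar xkm1 ≤ -(μ i * DX ^ 2) ∧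
      ψ i xbar + 2 * μ i * W xbar xkm1 < 0) ∧
    ∑ i, y i ≤ (ψ0 xbar - ψ0star + μ0 * DX ^ 2) /
      ((Finset.univ.inf' Finset.univ_nonempty μ) * DX ^ 2) := by
  have hD2 : 0 < DX ^ 2 := by positivity
  have hfeas : ∀ i, ψ i xbar + 2 * μ i * W xbar xkm1 ≤ -(μ i * DX ^ 2) := by
    intro i
    have h1 := hsf i
    have h2 : 2 * W xbar xkm1 ≤ DX ^ 2 := hdiam _ hxbar _ hxkm1
    have h3 : μ i * (2 * W xbar xkm1) ≤ μ i * DX ^ 2 :=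
      mul_le_mul_of_nonneg_left h2 (hμ i).le
    nlinarith
  set μmin := Finset.univ.inf' Finset.univ_nonempty μ with hμmin
  have hμminpos : 0 < μmin := by
    obtain ⟨i, _, hi⟩ := Finset.exists_mem_eq_inf' (Finset.univ_nonempty) μ
    rw [hμmin, hi]; exact hμ i
  have hμminle : ∀ i, μmin ≤ μ i := fun i => Finset.inf'_le _ (Finset.mem_univ i)
  constructor
  · intro i
    refine ⟨hfeas i, lt_of_le_of_lt (hfeas i) ?_⟩
    have := hμ i
    nlinarith
  · have hsad := hsaddle xbar hxbar
    have hsum : ∑ i, y i * (ψ i xbar + 2 * μ i * W xbar xkm1)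
        ≤ ∑ i, y i * (-(μmin * DX ^ 2)) := by
      apply Finset.sum_le_sum
      intro i _
      apply mul_le_mul_of_nonneg_left _ (hy i)
      refine (hfeas i).trans ?_
      have := hμminle i
      nlinarith
    have hsum2 : ∑ i, y i * (-(μmin * DX ^ 2)) = -(μmin * DX ^ 2) * ∑ i, y i := by
      rw [← Finset.sum_mul]; ring
    have hrhs : 0 ≤ (μ0 + ∑ i, μ i * y i) * W xbar xk := by
      apply mul_nonneg _ (hWpos _ _)
      have : 0 ≤ ∑ i, μ i * y i :=
        Finset.sum_nonneg fun i _ => mul_nonneg (hμ i).le (hy i)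
      linarith
    have h2 : 2 * W xbar xkm1 ≤ DX ^ 2 := hdiam _ hxbar _ hxkm1
    have hWk : 0 ≤ W xk xkm1 := hWpos _ _
    have key : μmin * DX ^ 2 * ∑ i, y i ≤ ψ0 xbar - ψ0star + μ0 * DX ^ 2 := by
      nlinarith [hsad, hsum, hsum2]
    have hpos : 0 < μmin * DX ^ 2 := by positivity
    rw [le_div_iff₀ hpos]
    linarith [key]
end

section
/- In the exact proximal point method, suppose the dual multipliers are uniformly bounded: ‖y_k‖₁ ≤ B for all k. Let k̂ = argmin_{1≤k≤K} [ψ₀(x_{k-1}) - ψ₀(x_k)]. Then x_{k̂} is an ε_K-KKT point with ε_K = max{2L_ω, 8L_ω²(μ₀ + ‖μ‖_∞ B)}·[ψ₀(x₀) - ψ₀*]/K; specifically Σᵢ |y_{k̂}⁽ⁱ⁾ψᵢ(x_{k̂})| ≤ 2L_ω[ψ₀(x₀) - ψ₀*]/K and d(∂ψ₀(x_{k̂}) + Σᵢ y_{k̂}⁽ⁱ⁾∂ψᵢ(x_{k̂}) + N_X(x_{k̂}), 0)² ≤ 8L_ω²(μ₀ + ‖μ‖_∞ B)[ψ₀(x₀)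 - ψ₀*]/K. -/
local notation "⟪" x ", " y "⟫" => @inner ℝ _ _ x y

/-- The set ∂ψ₀(x_k) + Σᵢ y_k⁽ⁱ⁾ ∂ψᵢ(x_k) + N_X(x_k) appearing in the
approximate stationarity condition. -/
def statSet {n m : ℕ} (X : Set (EuclideanSpace ℝ (Fin n)))
    (sψ0 : EuclideanSpace ℝ (Fin n) → Set (EuclideanSpace ℝ (Fin n)))
    (sψ : Fin m → EuclideanSpace ℝ (Fin n) → Set (EuclideanSpace ℝ (Fin n)))
    (yk : Fin m → ℝ) (xk : EuclideanSpace ℝ (Fin n)) :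
    Set (EuclideanSpace ℝ (Fin n)) :=
  {v | ∃ g0 ∈ sψ0 xk, ∃ g : Fin m → EuclideanSpace ℝ (Fin n),
    (∀ i, g i ∈ sψ i xk) ∧
    ∃ u : EuclideanSpace ℝ (Fin n), (∀ w ∈ X, ⟪u, w - xk⟫ ≤ 0) ∧
      v = g0 + (∑ i, yk i • g i) + u}

/-- Theorem 3.13: complexity of the exact proximal point method under the
uniform dual boundedness assumption. -/
theorem stmt_11 {n m : ℕ} [NeZero m] (X : Set (EuclideanSpace ℝ (Fin n)))
    (hXc : Convex ℝ X)
    (W : EuclideanSpace ℝ (Fin n) → EuclideanSpace ℝ (Fin n) → ℝ)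
    (hWpos : ∀ x y, 0 ≤ W x y)
    (hWlow : ∀ x y, ‖x - y‖^2 ≤ 2 * W x y)
    (Lω : ℝ) (hLω : 0 ≤ Lω)
    (hWsym : ∀ x y, W x y ≤ Lω * W y x)
    (ω : EuclideanSpace ℝ (Fin n) → ℝ)
    (gradω : EuclideanSpace ℝ (Fin n) → EuclideanSpace ℝ (Fin n))
    (hgradLip : ∀ x y, ‖gradω x - gradω y‖ ≤ Lω * ‖x - y‖)
    (ψ0 : EuclideanSpace ℝ (Fin n) → ℝ) (ψ : Fin m → EuclideanSpace ℝ (Fin n) → ℝ)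
    (sψ0 : EuclideanSpace ℝ (Fin n) → Set (EuclideanSpace ℝ (Fin n)))
    (sψ : Fin m → EuclideanSpace ℝ (Fin n) → Set (EuclideanSpace ℝ (Fin n)))
    (μ0 : ℝ) (μ : Fin m → ℝ) (hμ0 : 0 ≤ μ0) (hμ : ∀ i, 0 ≤ μ i)
    (x : ℕ → EuclideanSpace ℝ (Fin n)) (y : ℕ → Fin m → ℝ)
    (hy : ∀ k i, 0 ≤ y k i)
    -- uniform dual boundedness: ‖y_k‖₁ ≤ B
    (B : ℝ) (hB : ∀ k, ∑ i, |y k i| ≤ B)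
    -- optimal value lower bound: ψ₀* ≤ ψ₀(x_k)
    (ψ0star : ℝ) (hψ0star : ∀ k, ψ0star ≤ ψ0 (x k))
    -- complementary slackness of the subproblem (relation (3.13))
    (hcs : ∀ k, 1 ≤ k → ∀ i,
      y k i * ψ i (x k) = -(2 * y k i * μ i * W (x k) (x (k - 1))))
    -- approximate stationarity bound (relation (3.14))
    (hstat : ∀ k, 1 ≤ k →
      Metric.infDist 0 (statSet X sψ0 sψ (y k) (x k)) ≤
        2 * (μ0 + ∑ i, μ i * y k i) * ‖gradω (x k) - gradω (x (k - 1))‖)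
    -- sufficient descent (relation (3.15))
    (hdesc : ∀ k, 1 ≤ k →
      ψ0 (x (k - 1)) - ψ0 (x k) ≥
        2 * μ0 * W (x k) (x (k - 1)) + (μ0 + ∑ i, μ i * y k i) * W (x (k - 1)) (x k))
    (K : ℕ) (hK : 1 ≤ K)
    -- k̂ = argmin_{1 ≤ k ≤ K} [ψ₀(x_{k-1}) - ψ₀(x_k)]
    (khat : ℕ) (hkhatmem : khat ∈ Finset.Icc 1 K)
    (hkhat : ∀ k ∈ Finset.Icc 1 K,
      ψ0 (x (khat - 1)) - ψ0 (x khat) ≤ ψ0 (x (k - 1)) - ψ0 (x k)) :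
    ∑ i, |y khat i * ψ i (x khat)| ≤ 2 * Lω * (ψ0 (x 0) - ψ0star) / K ∧
    Metric.infDist 0 (statSet X sψ0 sψ (y khat) (x khat)) ^ 2 ≤
      8 * Lω ^ 2 * (μ0 + (Finset.univ.sup' Finset.univ_nonempty μ) * B) *
        (ψ0 (x 0) - ψ0star) / K := by

  obtain ⟨hk1, hkK⟩ := Finset.mem_Icc.mp hkhatmem
  set D := ψ0 (x (khat - 1)) - ψ0 (x khat) with hDdef
  set S := ∑ i, μ i * y khat i with hSdef
  have hS0 : 0 ≤ S := Finset.sum_nonneg fun i _ => mul_nonneg (hμ i) (hy khat i)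
  have hKpos : (0:ℝ) < K := by exact_mod_cast hK
  -- telescoping bound
  have htel : ∑ k ∈ Finset.range K, (ψ0 (x k) - ψ0 (x (k+1))) = ψ0 (x 0) - ψ0 (x K) :=
    Finset.sum_range_sub' (fun k => ψ0 (x k)) K
  have hterm : ∀ k ∈ Finset.range K, D ≤ ψ0 (x k) - ψ0 (x (k+1)) := by
    intro k hk
    have hmem : k + 1 ∈ Finset.Icc 1 K := by
      simp only [Finset.mem_Icc]
      exact ⟨Nat.le_add_left 1 k, Nat.succ_le_of_lt (Finset.mem_range.mp hk)⟩
    have := hkhat (k+1) hmem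
    simpa using this
  have hKD : (K:ℝ) * D ≤ ψ0 (x 0) - ψ0star := by
    have h1 : (K:ℝ) * D ≤ ∑ k ∈ Finset.range K, (ψ0 (x k) - ψ0 (x (k+1))) := by
      have := Finset.card_nsmul_le_sum (Finset.range K) (fun k => ψ0 (x k) - ψ0 (x (k+1))) D
        (fun k hk => hterm k hk)
      simpa [nsmul_eq_mul] using this
    have h2 : ψ0 (x 0) - ψ0 (x K) ≤ ψ0 (x 0) - ψ0star := by
      have := hψ0star K; linarith
    linarith [htel ▸ h1]
  have hDle : D ≤ (ψ0 (x 0) - ψ0star) / K := by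
    rw [le_div_iff₀ hKpos]; nlinarith
  -- descent at khat
  have hd := hdesc khat hk1
  have hWk := hWpos (x khat) (x (khat - 1))
  have hWk' := hWpos (x (khat - 1)) (x khat)
  have hSW : S * W (x (khat - 1)) (x khat) ≤ D := by nlinarith
  have hD0 : 0 ≤ D := by nlinarith
  have hDK : D ≤ (ψ0 (x 0) - ψ0star) / K := hDle
  constructor
  · -- first bound
    have hsum : ∑ i, |y khat i * ψ i (x khat)| = 2 * S * W (x khat) (x (khat - 1)) := by
      rw [Finset.mul_sum, Finset.sum_mul]
      refine Finset.sum_congr rfl fun i _ => ?_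
      rw [hcs khat hk1 i, abs_neg, abs_of_nonneg]
      · ring
      · have := mul_nonneg (mul_nonneg (mul_nonneg (by norm_num : (0:ℝ) ≤ 2) (hy khat i)) (hμ i)) hWk
        linarith
    rw [hsum]
    have hsym := hWsym (x khat) (x (khat - 1))
    have h1 : 2 * S * W (x khat) (x (khat - 1)) ≤ 2 * Lω * D := by nlinarith
    have h2 : 2 * Lω * D ≤ 2 * Lω * ((ψ0 (x 0) - ψ0star) / K) := by nlinarith
    calc 2 * S * W (x khat) (x (khat - 1)) ≤ 2 * Lω * D := h1
      _ ≤ 2 * Lω * ((ψ0 (x 0) - ψ0star) / K) := h2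
      _ = 2 * Lω * (ψ0 (x 0) - ψ0star) / K := by ring
  · -- second bound
    set I := Metric.infDist 0 (statSet X sψ0 sψ (y khat) (x khat)) with hIdef
    have hI0 : 0 ≤ I := Metric.infDist_nonneg
    have hIb := hstat khat hk1
    have hlip := hgradLip (x khat) (x (khat - 1))
    have hlow := hWlow (x (khat - 1)) (x khat)
    have hnorm : ‖x khat - x (khat - 1)‖ = ‖x (khat - 1) - x khat‖ := by
      rw [norm_sub_rev]
    have hnn : 0 ≤ ‖x khat - x (khat - 1)‖ := norm_nonneg _
    have hμ0S : 0 ≤ μ0 + S := by linarith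
    -- I ≤ 2(μ0+S) Lω ‖Δx‖
    have hI1 : I ≤ 2 * (μ0 + S) * (Lω * ‖x khat - x (khat - 1)‖) := by
      refine hIb.trans ?_
      have := mul_le_mul_of_nonneg_left hlip (by linarith : (0:ℝ) ≤ 2 * (μ0 + S))
      linarith
    have hsq : I ^ 2 ≤ (2 * (μ0 + S) * (Lω * ‖x khat - x (khat - 1)‖)) ^ 2 := by
      apply pow_le_pow_left₀ hI0 hI1
    have hn2 : ‖x khat - x (khat - 1)‖ ^ 2 ≤ 2 * W (x (khat - 1)) (x khat) := by
      rw [hnorm]; exact hlow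
    have hI2 : I ^ 2 ≤ 8 * Lω ^ 2 * (μ0 + S) ^ 2 * W (x (khat - 1)) (x khat) := by
      have h := mul_le_mul_of_nonneg_left hn2
        (show (0:ℝ) ≤ 4 * Lω ^ 2 * (μ0 + S) ^ 2 by positivity)
      calc I ^ 2 ≤ (2 * (μ0 + S) * (Lω * ‖x khat - x (khat - 1)‖)) ^ 2 := hsq
        _ = 4 * Lω ^ 2 * (μ0 + S) ^ 2 * ‖x khat - x (khat - 1)‖ ^ 2 := by ring
        _ ≤ 4 * Lω ^ 2 * (μ0 + S) ^ 2 * (2 * W (x (khat - 1)) (x khat)) := h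
        _ = 8 * Lω ^ 2 * (μ0 + S) ^ 2 * W (x (khat - 1)) (x khat) := by ring
    have hmain : (μ0 + S) * W (x (khat - 1)) (x khat) ≤ D := by
      have := mul_nonneg hμ0 hWk
      linarith
    have hI3 : I ^ 2 ≤ 8 * Lω ^ 2 * (μ0 + S) * D := by
      refine hI2.trans ?_
      calc 8 * Lω ^ 2 * (μ0 + S) ^ 2 * W (x (khat - 1)) (x khat)
          = 8 * Lω ^ 2 * (μ0 + S) * ((μ0 + S) * W (x (khat - 1)) (x khat)) := by ring
        _ ≤ 8 * Lω ^ 2 * (μ0 + S) * D :=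
            mul_le_mul_of_nonneg_left hmain (by positivity)
    -- μ0 + S ≤ μ0 + sup μ * B
    set μm := Finset.univ.sup' Finset.univ_nonempty μ with hμmdef
    have hμm0 : 0 ≤ μm := by
      obtain ⟨i⟩ := Finset.univ_nonempty (α := Fin m)
      exact (hμ i).trans (Finset.le_sup' μ (Finset.mem_univ i))
    have hB0 : 0 ≤ B := le_trans (Finset.sum_nonneg fun i _ => abs_nonneg _) (hB 0)
    have hSle : S ≤ μm * B := by
      have h1 : S ≤ ∑ i, μm * |y khat i| := by
        refine Finset.sum_le_sum fun i _ => ?_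
        have h2 : μ i ≤ μm := Finset.le_sup' μ (Finset.mem_univ i)
        have h3 : |y khat i| = y khat i := abs_of_nonneg (hy khat i)
        rw [h3]; exact mul_le_mul_of_nonneg_right h2 (hy khat i)
      rw [← Finset.mul_sum] at h1
      exact h1.trans (mul_le_mul_of_nonneg_left (hB khat) hμm0)
    have hfin : 8 * Lω ^ 2 * (μ0 + S) * D ≤ 8 * Lω ^ 2 * (μ0 + μm * B) * ((ψ0 (x 0) - ψ0star) / K) := by
      have hc0 : (0:ℝ) ≤ 8 * Lω ^ 2 := by positivity
      have h0 : 0 ≤ μ0 + μm * B := add_nonneg hμ0 (mul_nonneg hμm0 hB0)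
      have hle1 : μ0 + S ≤ μ0 + μm * B := by linarith
      calc 8 * Lω ^ 2 * (μ0 + S) * D
          ≤ 8 * Lω ^ 2 * (μ0 + μm * B) * D :=
            mul_le_mul_of_nonneg_right
              (mul_le_mul_of_nonneg_left hle1 hc0) hD0
        _ ≤ 8 * Lω ^ 2 * (μ0 + μm * B) * ((ψ0 (x 0) - ψ0star) / K) :=
            mul_le_mul_of_nonneg_left hDK (mul_nonneg hc0 h0)
    calc I ^ 2 ≤ 8 * Lω ^ 2 * (μ0 + S) * D := hI3
      _ ≤ 8 * Lω ^ 2 * (μ0 + μm * B) * ((ψ0 (x 0) - ψ0star) / K) := hfin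
      _ = 8 * Lω ^ 2 * (μ0 + μm * B) * (ψ0 (x 0) - ψ0star) / K := by ring
end

section
/- In the exact proximal point method, the KKT condition of the k-th subproblem implies Σ_{i=1}^{m} |y_k⁽ⁱ⁾ ψᵢ(x_k)| = 2(μᵀy_k)·W(x_k, x_{k-1}) ≤ 2L_ω·[ψ₀(x_{k-1}) - ψ₀(x_k)]. -/
/-- Relation (3.16): complementary slackness of the proximal subproblem bounds
the complementarity residual by the objective decrease. -/
theorem stmt_12 {n m : ℕ} (X : Set (EuclideanSpace ℝ (Fin n)))
    (W : EuclideanSpace ℝ (Fin n) → EuclideanSpace ℝ (Fin n) → ℝ)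
    (hWpos : ∀ x y, 0 ≤ W x y)
    (Lω : ℝ) (hLω : 0 ≤ Lω)
    (hWsym : ∀ x y, W x y ≤ Lω * W y x)
    (ψ0 : EuclideanSpace ℝ (Fin n) → ℝ) (ψ : Fin m → EuclideanSpace ℝ (Fin n) → ℝ)
    (μ0 : ℝ) (μ : Fin m → ℝ) (hμ0 : 0 ≤ μ0) (hμ : ∀ i, 0 ≤ μ i)
    (xkm1 xk : EuclideanSpace ℝ (Fin n))
    (y : Fin m → ℝ) (hy : ∀ i, 0 ≤ y i)
    -- complementary slackness of the subproblem
    (hcs : ∀ i, y i * (ψ i xk + 2 * μ i * W xk xkm1) = 0)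
    -- sufficient descent inequality
    (hdesc : ψ0 xkm1 - ψ0 xk ≥ (μ0 + ∑ i, μ i * y i) * W xkm1 xk) :
    (∑ i, |y i * ψ i xk|) = 2 * (∑ i, μ i * y i) * W xk xkm1 ∧
    2 * (∑ i, μ i * y i) * W xk xkm1 ≤ 2 * Lω * (ψ0 xkm1 - ψ0 xk) := by
  have hterm : ∀ i : Fin m, |y i * ψ i xk| = 2 * (μ i * y i) * W xk xkm1 := by
    intro i
    have h := hcs i
    have : y i * ψ i xk = -(2 * (μ i * y i) * W xk xkm1) := by ring_nf; nlinarith [hcs i]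
    rw [this, abs_neg, abs_of_nonneg (mul_nonneg (mul_nonneg (by norm_num) (mul_nonneg (hμ i) (hy i))) (hWpos _ _))]
  have hsum : (∑ i, |y i * ψ i xk|) = 2 * (∑ i, μ i * y i) * W xk xkm1 := by
    rw [Finset.sum_congr rfl (fun i _ => hterm i), ← Finset.sum_mul, ← Finset.mul_sum]
  refine ⟨hsum, ?_⟩
  have hS : 0 ≤ ∑ i, μ i * y i := Finset.sum_nonneg fun i _ => mul_nonneg (hμ i) (hy i)
  have h1 : (∑ i, μ i * y i) * W xk xkm1 ≤ (∑ i, μ i * y i) * (Lω * W xkm1 xk) :=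
    mul_le_mul_of_nonneg_left (hWsym xk xkm1) hS
  have h2 : (∑ i, μ i * y i) * W xkm1 xk ≤ ψ0 xkm1 - ψ0 xk := by
    nlinarith [hWpos xkm1 xk]
  nlinarith [hWpos xkm1 xk, mul_nonneg hS (hWpos xk xkm1)]
end

section
/- Let (x*, y*) be a saddle point of the Lagrangian L(x,y) = ψ₀(x) + ⟨y, ψ(x)⟩ over x ∈ X, y ≥ 0, i.e., L(x*, y) ≤ L(x*, y*) ≤ L(x, y*) for all x ∈ X, y ≥ 0. For any x̄ ∈ X define ŷ := (‖y*‖₂ + 1)·[ψ(x̄)]₊/‖[ψ(x̄)]₊‖₂ (when [ψ(x̄)]₊ ≠ 0). Then the gap Q(z̄, ẑ) := L(x̄, ŷ) - L(x*, ȳ) satisfies Q(z̄, ẑ) ≥ ‖[ψ(x̄)]₊‖₂ for any ȳ ≥ 0, where z̄ = (x̄, ȳ) and ẑ = (x*, ŷ). -/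
/-- The gap function Q(z̄, ẑ) with ŷ = (‖y*‖₂+1)[ψ(x̄)]₊/‖[ψ(x̄)]₊‖₂ upper bounds
the constraint violation ‖[ψ(x̄)]₊‖₂. -/
theorem stmt_15 {n m : ℕ} (X : Set (EuclideanSpace ℝ (Fin n))) (hXc : Convex ℝ X)
    (ψ0 : EuclideanSpace ℝ (Fin n) → ℝ) (ψ : EuclideanSpace ℝ (Fin n) → Fin m → ℝ)
    (hψ0 : ConvexOn ℝ X ψ0) (hψ : ∀ i, ConvexOn ℝ X fun x => ψ x i)
    (L : EuclideanSpace ℝ (Fin n) → (Fin m → ℝ) → ℝ)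
    (hL : ∀ x y, L x y = ψ0 x + ∑ i, y i * ψ x i)
    (xstar : EuclideanSpace ℝ (Fin n)) (ystar : Fin m → ℝ)
    (hxstar : xstar ∈ X) (hystar : ∀ i, 0 ≤ ystar i)
    -- (x*, y*) is a saddle point of L over X × ℝ₊^m
    (hsaddle : ∀ x ∈ X, ∀ y : Fin m → ℝ, (∀ i, 0 ≤ y i) →
      L xstar y ≤ L xstar ystar ∧ L xstar ystar ≤ L x ystar)
    (xbar : EuclideanSpace ℝ (Fin n)) (hxbar : xbar ∈ X)
    (ybar : Fin m → ℝ) (hybar : ∀ i, 0 ≤ ybar i)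
    -- [ψ(x̄)]₊ ≠ 0
    (hpos : Real.sqrt (∑ i, max (ψ xbar i) 0 ^ 2) ≠ 0)
    (yhat : Fin m → ℝ)
    (hyhat : ∀ i, yhat i =
      (Real.sqrt (∑ j, ystar j ^ 2) + 1) * max (ψ xbar i) 0 /
        Real.sqrt (∑ j, max (ψ xbar j) 0 ^ 2)) :
    L xbar yhat - L xstar ybar ≥ Real.sqrt (∑ i, max (ψ xbar i) 0 ^ 2) := by
  set S : ℝ := Real.sqrt (∑ i, max (ψ xbar i) 0 ^ 2) with hSdef
  set T : ℝ := Real.sqrt (∑ j, ystar j ^ 2) with hTdef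
  have hSnn : 0 ≤ S := Real.sqrt_nonneg _
  have hS0 : 0 < S := lt_of_le_of_ne hSnn (Ne.symm hpos)
  have hTnn : 0 ≤ T := Real.sqrt_nonneg _
  have hS2 : S ^ 2 = ∑ i, max (ψ xbar i) 0 ^ 2 :=
    Real.sq_sqrt (Finset.sum_nonneg fun i _ => sq_nonneg _)
  have hT2 : T ^ 2 = ∑ j, ystar j ^ 2 :=
    Real.sq_sqrt (Finset.sum_nonneg fun i _ => sq_nonneg _)
  -- saddle point inequalities
  obtain ⟨h1, h2⟩ := hsaddle xbar hxbar ybar hybar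
  have hchain : L xstar ybar ≤ L xbar ystar := h1.trans h2
  -- compute ∑ yhat i * ψ xbar i
  have hmax : ∀ a : ℝ, max a 0 * a = max a 0 ^ 2 := by
    intro a
    rcases le_total a 0 with h | h
    · simp [max_eq_right h]
    · simp [max_eq_left h]; ring
  have key1 : ∑ i, yhat i * ψ xbar i = (T + 1) * S := by
    have : ∀ i, yhat i * ψ xbar i = (T + 1) / S * max (ψ xbar i) 0 ^ 2 := by
      intro i
      rw [hyhat i, ← hmax (ψ xbar i)]
      field_simp
    rw [Finset.sum_congr rfl fun i _ => this i, ← Finset.mul_sum, ← hS2]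
    field_simp
  -- Cauchy-Schwarz bound
  have hcs : ∑ i, ystar i * ψ xbar i ≤ T * S := by
    have step1 : ∑ i, ystar i * ψ xbar i ≤ ∑ i, ystar i * max (ψ xbar i) 0 :=
      Finset.sum_le_sum fun i _ => mul_le_mul_of_nonneg_left (le_max_left _ _) (hystar i)
    have step2 : (∑ i, ystar i * max (ψ xbar i) 0) ^ 2 ≤ T ^ 2 * S ^ 2 := by
      rw [hT2, hS2]
      exact Finset.sum_mul_sq_le_sq_mul_sq _ _ _
    have step3 : ∑ i, ystar i * max (ψ xbar i) 0 ≤ T * S := by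
      have hnn : 0 ≤ ∑ i, ystar i * max (ψ xbar i) 0 :=
        Finset.sum_nonneg fun i _ => mul_nonneg (hystar i) (le_max_right _ _)
      nlinarith [mul_nonneg hTnn hSnn]
    exact step1.trans step3
  -- conclude
  have : L xbar yhat - L xbar ystar ≥ S := by
    rw [hL, hL, key1]
    have : ∑ i, ystar i * ψ xbar i ≤ T * S := hcs
    nlinarith
  linarith
end
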